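/- Let U ⊆ ℝ³ be open with coordinates (x¹,x²,y³) and write a* = ∂a/∂y³. Let h₃, h₄, φ : U → ℝ be such that h₄ is C² in y³, h₃ is C¹ in y³, φ is C¹ in y³, h₃ h₄ is nowhere zero, h₄* is nowhere zero, and the generating-function relation e^{2φ} · |h₃ h₄| = (h₄*)² holds on U. Then on U: φ* · h₄* = h₄** − (h₄*)²/(2h₄) − h₃* h₄*/(2h₃). In particular, for any function Υ on U, the vertical equation −(1/(2h₃h₄))[h₄** − (h₄*)²/(2h₄) − h₃*h₄*/(2h₃)] = −Υ holds if and only if φ* h₄* = 2 h₃ h₄ Υ. -/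

import Mathlib

noncomputable section

/-- Partial derivative `∂₃ = ∂/∂y³` on `ℝ³` (coordinates `(x¹,x²,y³)` indexed by `0,1,2`),
taken as a derivative along the `y³` coordinate line; `pdy a = a*`. -/
def pdy (f : (Fin 3 → ℝ) → ℝ) (x : Fin 3 → ℝ) : ℝ :=
  deriv (fun t => f (Function.update x 2 t)) (x 2)

lemma pdy_update (f : (Fin 3 → ℝ) → ℝ) (x : Fin 3 → ℝ) (t : ℝ) :
    pdy f (Function.update x 2 t) = deriv (fun s => f (Function.update x 2 s)) t := by
  unfold pdy
  simp [Function.update_idem]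

lemma diffAt_deriv_of_contDiffAt_two (f : ℝ → ℝ) (x : ℝ) (h : ContDiffAt ℝ 2 f x) :
    DifferentiableAt ℝ (deriv f) x := by
  obtain ⟨u, hu, hcd⟩ := h.contDiffOn (m := 2) le_rfl (by simp)
  obtain ⟨v, hvu, hvo, hxv⟩ := mem_nhds_iff.mp hu
  have h1 : ContDiffOn ℝ 1 (deriv f) v :=
    (hcd.mono hvu).deriv_of_isOpen hvo (by norm_num)
  exact ((h1.contDiffAt (hvo.mem_nhds hxv)).differentiableAt (by norm_num))

/-- The key generating-function identity: if `e^{2φ}|h₃h₄| = (h₄*)²` then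
`φ* h₄* = h₄** − (h₄*)²/(2h₄) − h₃* h₄*/(2h₃)`; consequently the second-order vertical
Einstein equation is equivalent to the first-order equation `φ* h₄* = 2 h₃ h₄ Υ`. -/
theorem generating_function_identity
    (U : Set (Fin 3 → ℝ)) (hU : IsOpen U)
    (h₃ h₄ φ : (Fin 3 → ℝ) → ℝ)
    (hh₄ : ∀ x ∈ U, ContDiffAt ℝ 2 (fun t => h₄ (Function.update x 2 t)) (x 2))
    (hh₃ : ∀ x ∈ U, ContDiffAt ℝ 1 (fun t => h₃ (Function.update x 2 t)) (x 2))
    (hφ : ∀ x ∈ U, ContDiffAt ℝ 1 (fun t => φ (Function.update x 2 t)) (x 2))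
    (hne : ∀ x ∈ U, h₃ x * h₄ x ≠ 0)
    (hh₄s : ∀ x ∈ U, pdy h₄ x ≠ 0)
    (hgen : ∀ x ∈ U, Real.exp (2 * φ x) * |h₃ x * h₄ x| = (pdy h₄ x) ^ 2) :
    (∀ x ∈ U,
      pdy φ x * pdy h₄ x =
        pdy (pdy h₄) x - (pdy h₄ x) ^ 2 / (2 * h₄ x) -
          pdy h₃ x * pdy h₄ x / (2 * h₃ x)) ∧
    ∀ Υ : (Fin 3 → ℝ) → ℝ, ∀ x ∈ U,
      (-(1 / (2 * h₃ x * h₄ x)) *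
          (pdy (pdy h₄) x - (pdy h₄ x) ^ 2 / (2 * h₄ x) -
            pdy h₃ x * pdy h₄ x / (2 * h₃ x)) = -Υ x ↔
        pdy φ x * pdy h₄ x = 2 * h₃ x * h₄ x * Υ x) := by
  have key : ∀ x ∈ U,
      pdy φ x * pdy h₄ x =
        pdy (pdy h₄) x - (pdy h₄ x) ^ 2 / (2 * h₄ x) -
          pdy h₃ x * pdy h₄ x / (2 * h₃ x) := by
    intro x hx
    set a := x 2 with ha
    have hxa : Function.update x 2 a = x := Function.update_eq_self 2 x
    set g₃ : ℝ → ℝ := fun t => h₃ (Function.update x 2 t) with hg3def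
    set g₄ : ℝ → ℝ := fun t => h₄ (Function.update x 2 t) with hg4def
    set gφ : ℝ → ℝ := fun t => φ (Function.update x 2 t) with hgpdef
    have hg4 : ContDiffAt ℝ 2 g₄ a := hh₄ x hx
    have hd4 : DifferentiableAt ℝ g₄ a := hg4.differentiableAt (by norm_num)
    have hd3 : DifferentiableAt ℝ g₃ a := (hh₃ x hx).differentiableAt (by norm_num)
    have hdφ : DifferentiableAt ℝ gφ a := (hφ x hx).differentiableAt (by norm_num)
    have hd4' : DifferentiableAt ℝ (deriv g₄) a := diffAt_deriv_of_contDiffAt_two g₄ a hg4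
    -- eventual membership in U along the coordinate line
    have hmem : ∀ᶠ t in nhds a, Function.update x 2 t ∈ U := by
      have hc : ContinuousAt (fun t => Function.update x 2 t) a :=
        (continuous_const.update 2 continuous_id).continuousAt
      exact hc (hU.mem_nhds (by simpa [hxa] using hx))
    -- the generating relation along the line
    have hE : ∀ᶠ t in nhds a,
        Real.exp (2 * gφ t) * |g₃ t * g₄ t| = (deriv g₄ t) ^ 2 := by
      filter_upwards [hmem] with t ht
      have h1 := hgen _ ht
      rw [pdy_update] at h1
      simpa [hg3def, hg4def, hgpdef] using h1
    -- nonvanishing, sign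
    have hPne : g₃ a * g₄ a ≠ 0 := by
      have := hne x hx
      simpa [hg3def, hg4def, hxa] using this
    have hp3 : g₃ a ≠ 0 := left_ne_zero_of_mul hPne
    have hp4 : g₄ a ≠ 0 := right_ne_zero_of_mul hPne
    have hB : deriv g₄ a ≠ 0 := by
      have := hh₄s x hx
      simpa [pdy, hg4def] using this
    obtain ⟨ε, hεP, habs⟩ : ∃ ε : ℝ,
        |g₃ a * g₄ a| = ε * (g₃ a * g₄ a) ∧
        ∀ᶠ t in nhds a, |g₃ t * g₄ t| = ε * (g₃ t * g₄ t) := by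
      have hc : ContinuousAt (fun t => g₃ t * g₄ t) a :=
        hd3.continuousAt.mul hd4.continuousAt
      rcases hPne.lt_or_gt with hP | hP
      · refine ⟨-1, by rw [abs_of_neg hP]; ring, ?_⟩
        filter_upwards [hc.eventually_mem (Iio_mem_nhds hP)] with t ht
        rw [abs_of_neg ht]; ring
      · refine ⟨1, by rw [abs_of_pos hP]; ring, ?_⟩
        filter_upwards [hc.eventually_mem (Ioi_mem_nhds hP)] with t ht
        rw [abs_of_pos ht]; ring
    -- the two functions agree near a
    have hEE : (fun t => Real.exp (2 * gφ t) * (ε * (g₃ t * g₄ t)))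
        =ᶠ[nhds a] (fun t => (deriv g₄ t) ^ 2) := by
      filter_upwards [hE, habs] with t h1 h2
      rw [← h2, h1]
    -- derivatives
    have h1 : HasDerivAt (fun t => Real.exp (2 * gφ t))
        (Real.exp (2 * gφ a) * (2 * deriv gφ a)) a := by
      have := ((hdφ.hasDerivAt.const_mul (2:ℝ)).exp)
      simpa using this
    have h2 : HasDerivAt (fun t => ε * (g₃ t * g₄ t))
        (ε * (deriv g₃ a * g₄ a + g₃ a * deriv g₄ a)) a :=
      (hd3.hasDerivAt.mul hd4.hasDerivAt).const_mul ε
    have hL : HasDerivAt (fun t => Real.exp (2 * gφ t) * (ε * (g₃ t * g₄ t)))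
        (Real.exp (2 * gφ a) * (2 * deriv gφ a) * (ε * (g₃ a * g₄ a)) +
          Real.exp (2 * gφ a) * (ε * (deriv g₃ a * g₄ a + g₃ a * deriv g₄ a))) a :=
      h1.mul h2
    have hR : HasDerivAt (fun t => (deriv g₄ t) ^ 2)
        ((2 : ℕ) * deriv g₄ a ^ 1 * deriv (deriv g₄) a) a := hd4'.hasDerivAt.pow 2
    have hLR : Real.exp (2 * gφ a) * (2 * deriv gφ a) * (ε * (g₃ a * g₄ a)) +
          Real.exp (2 * gφ a) * (ε * (deriv g₃ a * g₄ a + g₃ a * deriv g₄ a)) =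
        (2 : ℕ) * deriv g₄ a ^ 1 * deriv (deriv g₄) a :=
      (hL.congr_of_eventuallyEq hEE.symm).unique hR
    -- the base generating relation at x
    have hgen' : Real.exp (2 * gφ a) * (ε * (g₃ a * g₄ a)) = (deriv g₄ a) ^ 2 := by
      have h1 := hgen x hx
      rw [← hεP]
      simpa [pdy, hg3def, hg4def, hgpdef, hxa] using h1
    -- rewrite goal
    have hpφ : pdy φ x = deriv gφ a := rfl
    have hp4' : pdy h₄ x = deriv g₄ a := rfl
    have hp3' : pdy h₃ x = deriv g₃ a := rfl
    have hpp : pdy (pdy h₄) x = deriv (deriv g₄) a := by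
      have heq : (fun t => pdy h₄ (Function.update x 2 t)) = deriv g₄ :=
        funext fun t => pdy_update h₄ x t
      show deriv (fun t => pdy h₄ (Function.update x 2 t)) (x 2) = _
      rw [heq]
    have hx3 : h₃ x = g₃ a := by rw [hg3def]; simp [hxa]
    have hx4 : h₄ x = g₄ a := by rw [hg4def]; simp [hxa]
    rw [hpφ, hp4', hp3', hpp, hx3, hx4]
    set E := Real.exp (2 * gφ a) * ε with hEdef
    have hgen2 : E * (g₃ a * g₄ a) = (deriv g₄ a) ^ 2 := by
      rw [hEdef]; linarith [hgen']
    have hLR2 : E * (2 * deriv gφ a) * (g₃ a * g₄ a) +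
        E * (deriv g₃ a * g₄ a + g₃ a * deriv g₄ a) =
        2 * deriv g₄ a * deriv (deriv g₄) a := by
      rw [hEdef]
      push_cast at hLR
      linarith [hLR]
    have hclear : deriv gφ a * deriv g₄ a * (2 * g₄ a) * (2 * g₃ a) * deriv g₄ a =
        (deriv (deriv g₄) a * (2 * g₄ a) * (2 * g₃ a) - (deriv g₄ a) ^ 2 * (2 * g₃ a) -
          deriv g₃ a * deriv g₄ a * (2 * g₄ a)) * deriv g₄ a := by
      linear_combination (2 * (g₃ a * g₄ a)) * hLR2 -
        (4 * deriv gφ a * (g₃ a * g₄ a) + 2 * (deriv g₃ a * g₄ a) +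
          2 * (g₃ a * deriv g₄ a)) * hgen2
    have hc2 := mul_right_cancel₀ hB hclear
    field_simp
    linear_combination (1/2 : ℝ) * hc2
  refine ⟨key, ?_⟩
  intro Υ x hx
  rw [← key x hx]
  have h3 : h₃ x ≠ 0 := left_ne_zero_of_mul (hne x hx)
  have h4 : h₄ x ≠ 0 := right_ne_zero_of_mul (hne x hx)
  constructor
  · intro h
    field_simp at h
    linarith
  · intro h
    field_simp
    linarith
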